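/- Suppose $(\alpha,\beta)$ is a Bailey pair relative to $a$. Then for any nonnegative integer $M$ and any parameters $\rho_1,\rho_2$, $\sum_{L=0}^M \frac{(\rho_1)_L(\rho_2)_L(aq/\rho_1\rho_2)^L}{(aq/\rho_1)_L(aq/\rho_2)_L} \cdot \frac{\alpha_L}{(q)_{M-L}(aq)_{M+L}} = \sum_{L=0}^M \frac{(\rho_1)_L(\rho_2)_L(aq/\rho_1\rho_2)^L (aq/\rho_1\rho_2)_{M-L}}{(aq/\rho_1)_M(aq/\rho_2)_M(q)_{M-L}} \beta_L$. -/

import Mathlib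

open Finset

/-- The $q$-Pochhammer symbol $(x;q)_n$. -/
noncomputable def qp (q x : ℂ) (n : ℕ) : ℂ := ∏ k ∈ Finset.range n, (1 - x * q ^ k)

lemma qp_zero (q x : ℂ) : qp q x 0 = 1 := by simp [qp]

lemma qp_succ (q x : ℂ) (n : ℕ) : qp q x (n+1) = qp q x n * (1 - x * q ^ n) :=
  Finset.prod_range_succ _ _

lemma fac_q {q : ℂ} (hq0 : ∀ n : ℕ, qp q q n ≠ 0) (n : ℕ) : (1:ℂ) - q*q^n ≠ 0 := by
  have h := hq0 (n+1); rw [qp_succ] at h; exact right_ne_zero_of_mul h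

lemma fac_aq {q a : ℂ} (haq : ∀ n : ℕ, qp q (a*q) n ≠ 0) (n : ℕ) : (1:ℂ) - a*q*q^n ≠ 0 := by
  have h := haq (n+1); rw [qp_succ] at h; exact right_ne_zero_of_mul h

noncomputable def TT (q a ρ₁ ρ₂ : ℂ) (i κ j : ℕ) : ℂ :=
  qp q ρ₁ (i+j) * qp q ρ₂ (i+j) * (a*q/(ρ₁*ρ₂))^(i+j) * qp q (a*q/(ρ₁*ρ₂)) (κ-j) /
    (qp q q (κ-j) * qp q q j * qp q (a*q) (2*i+j))

noncomputable def GG (q a ρ₁ ρ₂ : ℂ) (i κ j : ℕ) : ℂ :=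
  -(q^(κ+1-j) * (1 - q^j) * (1 - a*q^(2*i+j)) * qp q ρ₁ (i+j) * qp q ρ₂ (i+j) *
     (a*q/(ρ₁*ρ₂))^(i+j) * (qp q (a*q/(ρ₁*ρ₂)) (κ+1-j))) /
   ((1 - q^(κ+1)) * (1 - a*q^(2*i+κ+1)) * qp q q (κ+1-j) * qp q q j * qp q (a*q) (2*i+j))

set_option maxHeartbeats 2000000 in
lemma wz_poly (q a ρ₁ ρ₂ A B W Zk Ck Cj Caq X Y K : ℂ)
    (hρ₁ : ρ₁ ≠ 0) (hρ₂ : ρ₂ ≠ 0) (hCk : Ck ≠ 0) (hCj : Cj ≠ 0) (hCaq : Caq ≠ 0)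
    (d1 : 1 - q*Y*K ≠ 0) (d2 : 1 - a*q*X^2*Y*K ≠ 0) (d3 : 1 - q*K ≠ 0)
    (d4 : 1 - q*Y ≠ 0) (d5 : 1 - a*q*X^2*Y ≠ 0) :
    A*B*W*(Zk*(1 - (a*q/(ρ₁*ρ₂))*K)) / ((Ck*(1 - q*K)) * Cj * Caq)
    = (1 - a*q*X*Y*K/ρ₁)*(1 - a*q*X*Y*K/ρ₂) / ((1 - q*Y*K)*(1 - a*q*X^2*Y*K))
        * (A*B*W*Zk/(Ck*Cj*Caq))
    + ( -(K * (1 - q*Y) * (1 - a*q*X^2*Y) * (A*(1-ρ₁*X*Y)) * (B*(1-ρ₂*X*Y))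
            * (W*(a*q/(ρ₁*ρ₂))) * Zk)
          / ((1 - q*Y*K)*(1 - a*q*X^2*Y*K) * Ck * (Cj*(1 - q*Y)) * (Caq*(1 - a*q*X^2*Y)))
      - -((q*K) * (1 - Y) * (1 - a*X^2*Y) * A*B*W*(Zk*(1 - (a*q/(ρ₁*ρ₂))*K)))
          / ((1 - q*Y*K)*(1 - a*q*X^2*Y*K) * (Ck*(1 - q*K)) * Cj * Caq) ) := by
  have hD : (1-q*Y*K)*(1-a*q*X^2*Y*K)*Ck*(1-q*K)*Cj*(1-q*Y)*Caq*(1-a*q*X^2*Y)*(ρ₁*ρ₂) ≠ 0 := by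
    simp [hCk,hCj,hCaq,d1,d2,d3,d4,d5,hρ₁,hρ₂]
  have h1 : A*B*W*(Zk*(1 - (a*q/(ρ₁*ρ₂))*K)) / ((Ck*(1 - q*K)) * Cj * Caq)
      = (A*B*W*Zk*(ρ₁*ρ₂ - a*q*K)*((1-q*Y*K)*(1-a*q*X^2*Y*K)*(1-q*Y)*(1-a*q*X^2*Y)))
        / ((1-q*Y*K)*(1-a*q*X^2*Y*K)*Ck*(1-q*K)*Cj*(1-q*Y)*Caq*(1-a*q*X^2*Y)*(ρ₁*ρ₂)) := by
    rw [div_eq_div_iff (by simp [hCk,hCj,hCaq,d1,d2,d3,d4,d5]) hD]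
    field_simp
  have h2 : (1 - a*q*X*Y*K/ρ₁)*(1 - a*q*X*Y*K/ρ₂) / ((1 - q*Y*K)*(1 - a*q*X^2*Y*K))
        * (A*B*W*Zk/(Ck*Cj*Caq))
      = ((ρ₁ - a*q*X*Y*K)*(ρ₂ - a*q*X*Y*K)*A*B*W*Zk*((1-q*K)*(1-q*Y)*(1-a*q*X^2*Y)))
        / ((1-q*Y*K)*(1-a*q*X^2*Y*K)*Ck*(1-q*K)*Cj*(1-q*Y)*Caq*(1-a*q*X^2*Y)*(ρ₁*ρ₂)) := by
    rw [div_mul_div_comm,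
        div_eq_div_iff (by simp [hCk,hCj,hCaq,d1,d2,d3,d4,d5]) hD]
    field_simp
  have h3 : -(K * (1 - q*Y) * (1 - a*q*X^2*Y) * (A*(1-ρ₁*X*Y)) * (B*(1-ρ₂*X*Y))
            * (W*(a*q/(ρ₁*ρ₂))) * Zk)
          / ((1 - q*Y*K)*(1 - a*q*X^2*Y*K) * Ck * (Cj*(1 - q*Y)) * (Caq*(1 - a*q*X^2*Y)))
      = (-(K * (1 - q*Y) * (1 - a*q*X^2*Y) * (A*(1-ρ₁*X*Y)) * (B*(1-ρ₂*X*Y))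
            * (W*(a*q)) * Zk * (1-q*K)))
        / ((1-q*Y*K)*(1-a*q*X^2*Y*K)*Ck*(1-q*K)*Cj*(1-q*Y)*Caq*(1-a*q*X^2*Y)*(ρ₁*ρ₂)) := by
    rw [div_eq_div_iff (by simp [hCk,hCj,hCaq,d1,d2,d3,d4,d5]) hD]
    field_simp
  have h4 : -((q*K) * (1 - Y) * (1 - a*X^2*Y) * A*B*W*(Zk*(1 - (a*q/(ρ₁*ρ₂))*K)))
          / ((1 - q*Y*K)*(1 - a*q*X^2*Y*K) * (Ck*(1 - q*K)) * Cj * Caq)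
      = (-((q*K) * (1 - Y) * (1 - a*X^2*Y) * A*B*W*(Zk*(ρ₁*ρ₂ - a*q*K))
            * ((1-q*Y)*(1-a*q*X^2*Y))))
        / ((1-q*Y*K)*(1-a*q*X^2*Y*K)*Ck*(1-q*K)*Cj*(1-q*Y)*Caq*(1-a*q*X^2*Y)*(ρ₁*ρ₂)) := by
    rw [div_eq_div_iff (by simp [hCk,hCj,hCaq,d1,d2,d3,d4,d5]) hD]
    field_simp
  rw [h1, h2, h3, h4, div_sub_div_same, ← add_div]
  congr 1
  ring

set_option maxHeartbeats 2000000 in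
lemma wz_claim (q a ρ₁ ρ₂ : ℂ)
    (hq0 : ∀ n : ℕ, qp q q n ≠ 0) (haq : ∀ n : ℕ, qp q (a*q) n ≠ 0)
    (hρ₁ : ρ₁ ≠ 0) (hρ₂ : ρ₂ ≠ 0) (i κ j : ℕ) (hj : j ≤ κ) :
    TT q a ρ₁ ρ₂ i (κ+1) j =
      (1 - a*q^(i+κ+1)/ρ₁) * (1 - a*q^(i+κ+1)/ρ₂) / ((1 - q^(κ+1)) * (1 - a*q^(2*i+κ+1)))
        * TT q a ρ₁ ρ₂ i κ j
      + (GG q a ρ₁ ρ₂ i κ (j+1) - GG q a ρ₁ ρ₂ i κ j) := by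
  obtain ⟨k, rfl⟩ := Nat.exists_eq_add_of_le hj
  simp only [TT, GG, show j+k+1-j = k+1 by omega, show j+k-j = k by omega,
    show j+k+1-(j+1) = k by omega, show i+(j+1) = i+j+1 by omega,
    show 2*i+(j+1) = 2*i+j+1 by omega]
  rw [qp_succ q (a*q/(ρ₁*ρ₂)) k, qp_succ q q k, qp_succ q q j, qp_succ q (a*q) (2*i+j),
      qp_succ q ρ₁ (i+j), qp_succ q ρ₂ (i+j)]
  rw [show (a:ℂ)*q^(i+(j+k)+1) = a*q*q^i*q^j*q^k by ring,
      show (q:ℂ)^(j+k+1) = q*q^j*q^k by ring,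
      show (a:ℂ)*q^(2*i+(j+k)+1) = a*q*(q^i)^2*q^j*q^k by ring,
      show (q:ℂ)^(k+1) = q*q^k by ring,
      show (a:ℂ)*q^(2*i+j) = a*(q^i)^2*q^j by ring,
      show (a:ℂ)*q^(2*i+j+1) = a*q*(q^i)^2*q^j by ring,
      show (a:ℂ)*q*q^(2*i+j) = a*q*(q^i)^2*q^j by ring,
      show (ρ₁:ℂ)*q^(i+j) = ρ₁*q^i*q^j by ring,
      show (ρ₂:ℂ)*q^(i+j) = ρ₂*q^i*q^j by ring,
      show (q:ℂ)^(j+1) = q*q^j by ring,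
      pow_succ (a*q/(ρ₁*ρ₂)) (i+j)]
  have d1 : (1:ℂ) - q*q^j*q^k ≠ 0 := by
    have h := fac_q hq0 (j+k); rwa [show (q:ℂ)*q^(j+k) = q*q^j*q^k by ring] at h
  have d2 : (1:ℂ) - a*q*(q^i)^2*q^j*q^k ≠ 0 := by
    have h := fac_aq haq (2*i+j+k)
    rwa [show (a:ℂ)*q*q^(2*i+j+k) = a*q*(q^i)^2*q^j*q^k by ring] at h
  have d3 : (1:ℂ) - q*q^k ≠ 0 := fac_q hq0 k
  have d4 : (1:ℂ) - q*q^j ≠ 0 := fac_q hq0 j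
  have d5 : (1:ℂ) - a*q*(q^i)^2*q^j ≠ 0 := by
    have h := fac_aq haq (2*i+j)
    rwa [show (a:ℂ)*q*q^(2*i+j) = a*q*(q^i)^2*q^j by ring] at h
  exact wz_poly q a ρ₁ ρ₂ (qp q ρ₁ (i+j)) (qp q ρ₂ (i+j)) ((a*q/(ρ₁*ρ₂))^(i+j))
    (qp q (a*q/(ρ₁*ρ₂)) k) (qp q q k) (qp q q j) (qp q (a*q) (2*i+j)) (q^i) (q^j) (q^k)
    hρ₁ hρ₂ (hq0 k) (hq0 j) (haq (2*i+j)) d1 d2 d3 d4 d5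

set_option maxHeartbeats 2000000 in
lemma saalschutz (q a ρ₁ ρ₂ : ℂ)
    (hq0 : ∀ n : ℕ, qp q q n ≠ 0) (haq : ∀ n : ℕ, qp q (a*q) n ≠ 0)
    (hρ₁ : ρ₁ ≠ 0) (hρ₂ : ρ₂ ≠ 0)
    (h₁ : ∀ n : ℕ, qp q (a * q / ρ₁) n ≠ 0) (h₂ : ∀ n : ℕ, qp q (a * q / ρ₂) n ≠ 0)
    (i : ℕ) : ∀ κ : ℕ, ∑ j ∈ range (κ+1), TT q a ρ₁ ρ₂ i κ j
      = qp q ρ₁ i * qp q ρ₂ i * (a*q/(ρ₁*ρ₂))^i * qp q (a*q/ρ₁) (i+κ) * qp q (a*q/ρ₂) (i+κ) /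
        (qp q (a*q/ρ₁) i * qp q (a*q/ρ₂) i * qp q q κ * qp q (a*q) (2*i+κ)) := by
  intro κ
  induction κ with
  | zero =>
      rw [Finset.sum_range_one]
      simp only [TT, Nat.sub_self, Nat.add_zero, qp_zero]
      rw [div_eq_div_iff (by simp [haq (2*i)]) (by simp [h₁ i, h₂ i, haq (2*i)])]
      ring
  | succ κ ih =>
      have f1 : (1:ℂ) - q^(κ+1) ≠ 0 := by
        have h := fac_q hq0 κ; rwa [← pow_succ'] at h
      have f2 : (1:ℂ) - a*q^(2*i+κ+1) ≠ 0 := by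
        have h := fac_aq haq (2*i+κ)
        rwa [show (a:ℂ)*q*q^(2*i+κ) = a*q^(2*i+κ+1) by ring] at h
      rw [Finset.sum_range_succ]
      have hsum : ∑ j ∈ range (κ+1), TT q a ρ₁ ρ₂ i (κ+1) j
          = (1 - a*q^(i+κ+1)/ρ₁) * (1 - a*q^(i+κ+1)/ρ₂)
              / ((1 - q^(κ+1)) * (1 - a*q^(2*i+κ+1)))
              * (∑ j ∈ range (κ+1), TT q a ρ₁ ρ₂ i κ j)
            + (GG q a ρ₁ ρ₂ i κ (κ+1) - GG q a ρ₁ ρ₂ i κ 0) := by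
        rw [← Finset.sum_range_sub (fun j => GG q a ρ₁ ρ₂ i κ j) (κ+1), Finset.mul_sum,
            ← Finset.sum_add_distrib]
        exact Finset.sum_congr rfl fun j hj => wz_claim q a ρ₁ ρ₂ hq0 haq hρ₁ hρ₂ i κ j
          (Nat.lt_succ_iff.mp (Finset.mem_range.mp hj))
      have hG0 : GG q a ρ₁ ρ₂ i κ 0 = 0 := by simp [GG]
      have hGtop : GG q a ρ₁ ρ₂ i κ (κ+1) = - TT q a ρ₁ ρ₂ i (κ+1) (κ+1) := by
        simp only [GG, TT, Nat.sub_self, qp_zero, pow_zero,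
          show 2*i+(κ+1) = 2*i+κ+1 by omega]
        rw [← neg_div, div_eq_div_iff
          (by simp [f1, f2, hq0 (κ+1), haq (2*i+κ+1)])
          (by simp [hq0 (κ+1), haq (2*i+κ+1)])]
        ring
      rw [hsum, hG0, hGtop, ih]
      have hfin : (1 - a*q^(i+κ+1)/ρ₁) * (1 - a*q^(i+κ+1)/ρ₂)
              / ((1 - q^(κ+1)) * (1 - a*q^(2*i+κ+1)))
            * (qp q ρ₁ i * qp q ρ₂ i * (a*q/(ρ₁*ρ₂))^i * qp q (a*q/ρ₁) (i+κ)
                * qp q (a*q/ρ₂) (i+κ) /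
              (qp q (a*q/ρ₁) i * qp q (a*q/ρ₂) i * qp q q κ * qp q (a*q) (2*i+κ)))
          = qp q ρ₁ i * qp q ρ₂ i * (a*q/(ρ₁*ρ₂))^i * qp q (a*q/ρ₁) (i+(κ+1))
                * qp q (a*q/ρ₂) (i+(κ+1)) /
              (qp q (a*q/ρ₁) i * qp q (a*q/ρ₂) i * qp q q (κ+1) * qp q (a*q) (2*i+(κ+1))) := by
        rw [show i+(κ+1) = (i+κ)+1 by omega, show 2*i+(κ+1) = (2*i+κ)+1 by omega,
            qp_succ q (a*q/ρ₁) (i+κ), qp_succ q (a*q/ρ₂) (i+κ), qp_succ q q κ,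
            qp_succ q (a*q) (2*i+κ), div_mul_div_comm,
            div_eq_div_iff
              (by simp [f1, f2, h₁ i, h₂ i, hq0 κ, haq (2*i+κ)])
              (by simp [h₁ i, h₂ i, hq0 κ, haq (2*i+κ), fac_q hq0 κ, fac_aq haq (2*i+κ)])]
        field_simp
        ring
      linear_combination hfin

set_option maxHeartbeats 2000000 in
/-- Bailey's lemma in its finite (polynomial) form with free parameters $\rho_1,\rho_2$. -/
theorem bailey_lemma_finite (q a ρ₁ ρ₂ : ℂ) (α β : ℕ → ℂ)
    (hBP : ∀ L, β L = ∑ i ∈ Finset.range (L + 1),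
      α i / (qp q q (L - i) * qp q (a * q) (L + i)))
    (hq0 : ∀ n : ℕ, qp q q n ≠ 0)
    (haq : ∀ n : ℕ, qp q (a * q) n ≠ 0)
    (hρ₁ : ρ₁ ≠ 0) (hρ₂ : ρ₂ ≠ 0)
    (h₁ : ∀ n : ℕ, qp q (a * q / ρ₁) n ≠ 0)
    (h₂ : ∀ n : ℕ, qp q (a * q / ρ₂) n ≠ 0)
    (M : ℕ) :
    ∑ L ∈ Finset.range (M + 1),
        qp q ρ₁ L * qp q ρ₂ L * (a * q / (ρ₁ * ρ₂)) ^ L /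
          (qp q (a * q / ρ₁) L * qp q (a * q / ρ₂) L) *
        (α L / (qp q q (M - L) * qp q (a * q) (M + L)))
      = ∑ L ∈ Finset.range (M + 1),
        qp q ρ₁ L * qp q ρ₂ L * (a * q / (ρ₁ * ρ₂)) ^ L * qp q (a * q / (ρ₁ * ρ₂)) (M - L) /
          (qp q (a * q / ρ₁) M * qp q (a * q / ρ₂) M * qp q q (M - L)) * β L := by
  symm
  calc
    ∑ L ∈ Finset.range (M + 1),
        qp q ρ₁ L * qp q ρ₂ L * (a * q / (ρ₁ * ρ₂)) ^ L * qp q (a * q / (ρ₁ * ρ₂)) (M - L) /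
          (qp q (a * q / ρ₁) M * qp q (a * q / ρ₂) M * qp q q (M - L)) * β L
      = ∑ L ∈ Finset.Ico 0 (M + 1), ∑ i' ∈ Finset.Ico 0 (L + 1),
          qp q ρ₁ L * qp q ρ₂ L * (a * q / (ρ₁ * ρ₂)) ^ L * qp q (a * q / (ρ₁ * ρ₂)) (M - L) /
            (qp q (a * q / ρ₁) M * qp q (a * q / ρ₂) M * qp q q (M - L)) *
          (α i' / (qp q q (L - i') * qp q (a * q) (L + i'))) := by
        rw [Finset.range_eq_Ico]
        refine Finset.sum_congr rfl fun L _ => ?_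
        rw [hBP L, Finset.range_eq_Ico, Finset.mul_sum]
    _ = ∑ i' ∈ Finset.Ico 0 (M + 1), ∑ L ∈ Finset.Ico i' (M + 1),
          qp q ρ₁ L * qp q ρ₂ L * (a * q / (ρ₁ * ρ₂)) ^ L * qp q (a * q / (ρ₁ * ρ₂)) (M - L) /
            (qp q (a * q / ρ₁) M * qp q (a * q / ρ₂) M * qp q q (M - L)) *
          (α i' / (qp q q (L - i') * qp q (a * q) (L + i'))) := by
        rw [← Finset.sum_Ico_Ico_comm]
    _ = ∑ i' ∈ Finset.range (M + 1),
          qp q ρ₁ i' * qp q ρ₂ i' * (a * q / (ρ₁ * ρ₂)) ^ i' /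
            (qp q (a * q / ρ₁) i' * qp q (a * q / ρ₂) i') *
          (α i' / (qp q q (M - i') * qp q (a * q) (M + i'))) := by
        rw [← Finset.range_eq_Ico]
        refine Finset.sum_congr rfl fun i' hi' => ?_
        have hi : i' ≤ M := Nat.lt_succ_iff.mp (Finset.mem_range.mp hi')
        rw [Finset.sum_Ico_eq_sum_range, show M + 1 - i' = (M - i') + 1 by omega]
        have hterm : ∀ j ∈ Finset.range ((M - i') + 1),
            qp q ρ₁ (i'+j) * qp q ρ₂ (i'+j) * (a * q / (ρ₁ * ρ₂)) ^ (i'+j)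
                * qp q (a * q / (ρ₁ * ρ₂)) (M - (i'+j)) /
              (qp q (a * q / ρ₁) M * qp q (a * q / ρ₂) M * qp q q (M - (i'+j))) *
            (α i' / (qp q q (i'+j - i') * qp q (a * q) (i'+j + i')))
            = α i' / (qp q (a * q / ρ₁) M * qp q (a * q / ρ₂) M)
              * TT q a ρ₁ ρ₂ i' (M - i') j := by
          intro j hj
          have hjM : j ≤ M - i' := Nat.lt_succ_iff.mp (Finset.mem_range.mp hj)
          rw [show i'+j - i' = j by omega, show i'+j + i' = 2*i'+j by omega,
              show M - (i'+j) = (M - i') - j by omega]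
          simp only [TT]
          ring
        rw [Finset.sum_congr rfl hterm, ← Finset.mul_sum]
        have K := saalschutz q a ρ₁ ρ₂ hq0 haq hρ₁ hρ₂ h₁ h₂ i' (M - i')
        rw [show i' + (M - i') = M by omega, show 2*i' + (M - i') = M + i' by omega] at K
        rw [K, div_mul_div_comm, div_mul_div_comm,
            div_eq_div_iff
              (by simp [h₁ M, h₂ M, h₁ i', h₂ i', hq0 (M - i'), haq (M + i')])
              (by simp [h₁ i', h₂ i', hq0 (M - i'), haq (M + i')])]
        ring
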